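/- Let β ∈ (0,1], λ > 0 and t > 0. Then the second moment of the fractional Poisson process satisfies ∑_{n=0}^∞ n² · p_β(n|t,λ) = λ t^β / Γ(1+β) + 2 λ² t^{2β} / Γ(1+2β). Consequently its variance equals q t^β + t^{2β}(2 d − q²) with q = λ/Γ(1+β) and d = β q² B(β, 1+β), where B is the Beta function. -/

import Mathlib

open Real Finset

/-- pmf of the fractional Poisson process. -/
noncomputable def fracPoissonPMF (β lam t : ℝ) (n : ℕ) : ℝ :=
  (lam * t ^ β) ^ n / n.factorial *
    ∑' k : ℕ, ((n + k).factorial / k.factorial : ℝ) * (-(lam * t ^ β)) ^ k /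
      Real.Gamma (β * ((k : ℝ) + n) + 1)

/-- Beta function in terms of the real Gamma function. -/
noncomputable def betaFn (z₁ z₂ : ℝ) : ℝ :=
  Real.Gamma z₁ * Real.Gamma z₂ / Real.Gamma (z₁ + z₂)

private lemma alt_sum_choose (s : ℕ) :
    ∑ n ∈ range (s + 1), (-1 : ℝ) ^ n * s.choose n = if s = 0 then 1 else 0 := by
  have h := @Int.alternating_sum_range_choose s
  have h2 : ((∑ m ∈ range (s + 1), ((-1) ^ m * s.choose m : ℤ) : ℤ) : ℝ)
      = ∑ n ∈ range (s + 1), (-1 : ℝ) ^ n * s.choose n := by push_cast; rfl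
  rw [← h2, h]; split <;> norm_num

private lemma succ_choose (m i : ℕ) :
    ((i : ℝ) + 1) * ((m + 1).choose (i + 1)) = ((m : ℝ) + 1) * (m.choose i) := by
  have h := Nat.add_one_mul_choose_eq m i
  have h' : (((m + 1) * m.choose i : ℕ) : ℝ) = (((m + 1).choose (i + 1) * (i + 1) : ℕ) : ℝ) :=
    congrArg (fun n : ℕ => (n : ℝ)) h
  push_cast at h'
  linarith

private lemma alt_sum_choose_mul (s : ℕ) :
    ∑ n ∈ range (s + 1), (-1 : ℝ) ^ n * n * s.choose n = if s = 1 then -1 else 0 := by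
  cases s with
  | zero => simp
  | succ m =>
    rw [Finset.sum_range_succ']
    have h : ∀ i ∈ range (m + 1), (-1 : ℝ) ^ (i + 1) * (↑(i + 1)) * ((m + 1).choose (i + 1))
        = (-(m : ℝ) - 1) * ((-1) ^ i * (m.choose i)) := by
      intro i _
      have h1 := succ_choose m i
      rw [pow_succ]
      push_cast
      linear_combination (-(-1 : ℝ) ^ i) * h1
    rw [Finset.sum_congr rfl h, ← Finset.mul_sum, alt_sum_choose m]
    rcases Nat.eq_zero_or_pos m with hm | hm
    · subst hm; norm_num
    · rw [if_neg hm.ne', if_neg (by omega)]; ring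

private lemma alt_sum_choose_sq (s : ℕ) :
    ∑ n ∈ range (s + 1), (-1 : ℝ) ^ n * (n : ℝ) ^ 2 * s.choose n
      = (if s = 1 then -1 else 0) + (if s = 2 then 2 else 0) := by
  cases s with
  | zero => simp
  | succ m =>
    rw [Finset.sum_range_succ']
    have h : ∀ i ∈ range (m + 1), (-1 : ℝ) ^ (i + 1) * (↑(i + 1) : ℝ) ^ 2 * ((m + 1).choose (i + 1))
        = (-(m : ℝ) - 1) * ((-1) ^ i * (i : ℝ) * (m.choose i) + (-1) ^ i * (m.choose i)) := by
      intro i _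
      have h1 := succ_choose m i
      rw [pow_succ]
      push_cast
      linear_combination (-(-1 : ℝ) ^ i * ((i : ℝ) + 1)) * h1
    rw [Finset.sum_congr rfl h, ← Finset.mul_sum]
    rw [Finset.sum_add_distrib, alt_sum_choose_mul m, alt_sum_choose m]
    rcases m with _ | _ | m
    · norm_num
    · norm_num
    · simp only [if_neg (by omega : ¬ m + 2 = 0), if_neg (by omega : ¬ m + 2 = 1),
        if_neg (by omega : ¬ m + 3 = 1), if_neg (by omega : ¬ m + 3 = 2)]
      push_cast; ring

private lemma sign_eq {s n : ℕ} (h : n ≤ s) : (-1 : ℝ) ^ (s - n) = (-1) ^ s * (-1) ^ n := by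
  have h1 : (-1 : ℝ) ^ (s - n) * (-1) ^ n = (-1) ^ s := by
    rw [← pow_add, Nat.sub_add_cancel h]
  have h2 : (-1 : ℝ) ^ n * (-1) ^ n = 1 := by
    rw [← pow_add, ← two_mul, pow_mul]; norm_num
  calc (-1 : ℝ) ^ (s - n) = (-1) ^ (s - n) * ((-1) ^ n * (-1) ^ n) := by rw [h2, mul_one]
    _ = (-1) ^ s * (-1) ^ n := by rw [← mul_assoc, h1]

private lemma coef_one (s : ℕ) :
    ∑ n ∈ range (s + 1), (-1 : ℝ) ^ (s - n) * (n : ℝ) * (s.choose n)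
      = if s = 1 then 1 else 0 := by
  have h : ∀ n ∈ range (s + 1), (-1 : ℝ) ^ (s - n) * (n : ℝ) * (s.choose n)
      = (-1) ^ s * ((-1) ^ n * (n : ℝ) * (s.choose n)) := by
    intro n hn
    rw [sign_eq (by simp at hn; omega)]; ring
  rw [Finset.sum_congr rfl h, ← Finset.mul_sum, alt_sum_choose_mul]
  by_cases h1 : s = 1 <;> simp [h1]

private lemma coef_sq (s : ℕ) :
    ∑ n ∈ range (s + 1), (-1 : ℝ) ^ (s - n) * ((n : ℝ) ^ 2) * (s.choose n)
      = (if s = 1 then 1 else 0) + (if s = 2 then 2 else 0) := by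
  have h : ∀ n ∈ range (s + 1), (-1 : ℝ) ^ (s - n) * ((n : ℝ) ^ 2) * (s.choose n)
      = (-1) ^ s * ((-1) ^ n * (n : ℝ) ^ 2 * (s.choose n)) := by
    intro n hn
    rw [sign_eq (by simp at hn; omega)]; ring
  rw [Finset.sum_congr rfl h, ← Finset.mul_sum, alt_sum_choose_sq]
  by_cases h1 : s = 1
  · subst h1; norm_num
  · by_cases h2 : s = 2
    · subst h2; norm_num
    · simp [h1, h2]

private lemma summable_aux {β : ℝ} (hβ : 0 < β) {c : ℝ} (hc : 0 < c) :
    Summable (fun s : ℕ => (s : ℝ) ^ 2 * c ^ s / Real.Gamma (β * s + 1)) := by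
  obtain ⟨A, hA1, hA⟩ : ∃ A : ℝ, 1 ≤ A ∧ c / A ^ (β : ℝ) ≤ 1 / 2 := by
    refine ⟨max 1 ((2 * c) ^ (β⁻¹ : ℝ)), le_max_left _ _, ?_⟩
    have h2c : (0 : ℝ) < 2 * c := by linarith
    have hle : (2 * c) ≤ (max 1 ((2 * c) ^ (β⁻¹ : ℝ))) ^ (β : ℝ) := by
      calc (2 * c) = ((2 * c) ^ (β⁻¹ : ℝ)) ^ (β : ℝ) :=
            (Real.rpow_inv_rpow h2c.le hβ.ne').symm
        _ ≤ _ := Real.rpow_le_rpow (Real.rpow_nonneg h2c.le _) (le_max_right _ _) hβ.le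
    rw [div_le_div_iff₀ (lt_of_lt_of_le h2c hle) (by norm_num)]
    linarith
  have hApos : (0 : ℝ) < A := lt_of_lt_of_le one_pos hA1
  have hAβpos : (0 : ℝ) < A ^ (β : ℝ) := Real.rpow_pos_of_pos hApos _
  obtain ⟨M, hM⟩ : ∃ M : ℕ, ∀ m ≥ M, A ^ m ≤ m.factorial := by
    have := FloorSemiring.tendsto_pow_div_factorial_atTop A
    rw [Metric.tendsto_atTop] at this
    obtain ⟨M, hM⟩ := this 1 one_pos
    refine ⟨M, fun m hm => ?_⟩
    have := hM m hm
    rw [Real.dist_eq, sub_zero] at this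
    have hfac : (0 : ℝ) < m.factorial := by positivity
    have : A ^ m / m.factorial ≤ 1 := le_of_lt (lt_of_abs_lt this)
    calc A ^ m = A ^ m / m.factorial * m.factorial := by field_simp
      _ ≤ 1 * m.factorial := by apply mul_le_mul_of_nonneg_right this hfac.le
      _ = m.factorial := one_mul _
  obtain ⟨N, hN⟩ : ∃ N : ℕ, (M + 3 : ℝ) ≤ β * N := by
    obtain ⟨N, hN⟩ := exists_nat_ge ((M + 3) / β)
    exact ⟨N, by rwa [div_le_iff₀ hβ, mul_comm] at hN⟩
  apply summable_of_isBigO_nat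
    (g := fun s : ℕ => (s : ℝ) ^ 2 * (1 / 2 : ℝ) ^ s)
    (summable_pow_mul_geometric_of_norm_lt_one 2
      (by rw [Real.norm_eq_abs]; rw [abs_of_nonneg]; norm_num; norm_num))
  rw [Asymptotics.isBigO_iff]
  refine ⟨A ^ 2, ?_⟩
  filter_upwards [Filter.eventually_ge_atTop N] with s hs
  have hβs : (M + 3 : ℝ) ≤ β * s := le_trans hN (by
    apply mul_le_mul_of_nonneg_left _ hβ.le; exact_mod_cast hs)
  set m : ℕ := ⌊β * s⌋₊ with hm
  have hβs0 : (0 : ℝ) ≤ β * s := by linarith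
  have hmle : (m : ℝ) ≤ β * s := Nat.floor_le hβs0
  have hmge : (β * s : ℝ) - 1 ≤ m := by
    have := Nat.lt_floor_add_one (β * s); linarith
  have hm2 : M + 2 ≤ m := by
    have : (M + 2 : ℝ) ≤ (m : ℝ) := by linarith
    exact_mod_cast this
  have hΓ : ((m - 1).factorial : ℝ) ≤ Real.Gamma (β * s + 1) := by
    have h1 : Real.Gamma ((m : ℝ)) = (m - 1).factorial := by
      have : ((m - 1 : ℕ) : ℝ) + 1 = (m : ℝ) := by
        have : 1 ≤ m := by omega
        push_cast [Nat.cast_sub this]; ring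
      rw [← this, Real.Gamma_nat_eq_factorial]
    rw [← h1]
    apply (Real.Gamma_strictMonoOn_Ici.monotoneOn)
    · simp only [Set.mem_Ici]
      have : (2 : ℝ) ≤ (m : ℝ) := by
        have : 2 ≤ m := by omega
        exact_mod_cast this
      linarith
    · simp only [Set.mem_Ici]; linarith
    · linarith
  have hfA : A ^ (β * s - 2 : ℝ) ≤ ((m - 1).factorial : ℝ) := by
    calc A ^ (β * s - 2 : ℝ) ≤ A ^ ((m - 1 : ℕ) : ℝ) := by
          apply Real.rpow_le_rpow_of_exponent_le hA1
          have : 1 ≤ m := by omega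
          push_cast [Nat.cast_sub this]; linarith
      _ = A ^ (m - 1 : ℕ) := by rw [Real.rpow_natCast]
      _ ≤ _ := hM _ (by omega)
  have hrw : A ^ (β * s - 2 : ℝ) = (A ^ (β : ℝ)) ^ s / A ^ 2 := by
    rw [Real.rpow_sub hApos, ← Real.rpow_natCast A 2]
    congr 1
    rw [← Real.rpow_natCast (A ^ (β : ℝ)) s, ← Real.rpow_mul hApos.le]
  have hΓpos : (0 : ℝ) < Real.Gamma (β * s + 1) := Real.Gamma_pos_of_pos (by positivity)
  have hbound : (s : ℝ) ^ 2 * c ^ s / Real.Gamma (β * s + 1)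
      ≤ A ^ 2 * ((s : ℝ) ^ 2 * (1 / 2 : ℝ) ^ s) := by
    have hlow : (A ^ (β : ℝ)) ^ s / A ^ 2 ≤ Real.Gamma (β * s + 1) := by
      rw [← hrw]; exact le_trans hfA hΓ
    have hlowpos : (0 : ℝ) < (A ^ (β : ℝ)) ^ s / A ^ 2 := by positivity
    calc (s : ℝ) ^ 2 * c ^ s / Real.Gamma (β * s + 1)
        ≤ (s : ℝ) ^ 2 * c ^ s / ((A ^ (β : ℝ)) ^ s / A ^ 2) := by
          apply div_le_div_of_nonneg_left _ hlowpos hlow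
          positivity
      _ = A ^ 2 * ((s : ℝ) ^ 2 * (c / A ^ (β : ℝ)) ^ s) := by
          rw [div_pow]; field_simp
      _ ≤ A ^ 2 * ((s : ℝ) ^ 2 * (1 / 2 : ℝ) ^ s) := by
          apply mul_le_mul_of_nonneg_left _ (by positivity)
          apply mul_le_mul_of_nonneg_left _ (by positivity)
          exact pow_le_pow_left₀ (by positivity) hA s
  rw [Real.norm_eq_abs, Real.norm_eq_abs]
  calc |(s : ℝ) ^ 2 * c ^ s / Real.Gamma (β * s + 1)|
      = (s : ℝ) ^ 2 * c ^ s / Real.Gamma (β * s + 1) := abs_of_nonneg (by positivity)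
    _ ≤ A ^ 2 * ((s : ℝ) ^ 2 * (1 / 2 : ℝ) ^ s) := hbound
    _ ≤ A ^ 2 * |(s : ℝ) ^ 2 * (1 / 2 : ℝ) ^ s| := by
        apply mul_le_mul_of_nonneg_left (le_abs_self _) (by positivity)

private lemma moment_eq {β x : ℝ} (hβ : 0 < β) (hx : 0 < x) (w : ℕ → ℝ)
    (hw0 : ∀ n, 0 ≤ w n) (hw : ∀ n, w n ≤ (n : ℝ) ^ 2) :
    ∑' n : ℕ, w n * (x ^ n / n.factorial *
        ∑' k : ℕ, ((n + k).factorial / k.factorial : ℝ) * (-x) ^ k /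
          Real.Gamma (β * ((k : ℝ) + n) + 1))
      = ∑' s : ℕ, x ^ s / Real.Gamma (β * s + 1) *
          ∑ n ∈ Finset.range (s + 1), (-1 : ℝ) ^ (s - n) * w n * (s.choose n) := by
  have hΓpos : ∀ y : ℝ, 0 ≤ y → 0 < Real.Gamma (y + 1) :=
    fun y hy => Real.Gamma_pos_of_pos (by linarith)
  set F : ℕ × ℕ → ℝ := fun p => (w p.1 * (x ^ p.1 / p.1.factorial)) *
      (((p.1 + p.2).factorial / p.2.factorial : ℝ) * (-x) ^ p.2 /
        Real.Gamma (β * ((p.2 : ℝ) + p.1) + 1)) with hFdef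
  have hF : ∀ n k : ℕ, F (n, k)
      = (-1 : ℝ) ^ k * ((n + k).choose n) * w n * x ^ (n + k) /
          Real.Gamma (β * ((n + k : ℕ) : ℝ) + 1) := by
    intro n k
    have h' := Nat.choose_mul_factorial_mul_factorial (Nat.le_add_right n k)
    rw [Nat.add_sub_cancel_left] at h'
    have hfac : ((n + k).factorial : ℝ)
        = ((n + k).choose n) * n.factorial * k.factorial := by exact_mod_cast h'.symm
    have hk : β * ((k : ℝ) + n) + 1 = β * ((n + k : ℕ) : ℝ) + 1 := by push_cast; ring
    have hn0 : (n.factorial : ℝ) ≠ 0 := by positivity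
    have hk0 : (k.factorial : ℝ) ≠ 0 := by positivity
    have hΓ : Real.Gamma (β * ((n + k : ℕ) : ℝ) + 1) ≠ 0 :=
      (hΓpos _ (by positivity)).ne'
    rw [hFdef]
    simp only [hk]
    rw [hfac, neg_pow, pow_add]
    field_simp
  have habs : ∀ p : ℕ × ℕ, |F p|
      = ((p.1 + p.2).choose p.1) * w p.1 * x ^ (p.1 + p.2) /
          Real.Gamma (β * ((p.1 + p.2 : ℕ) : ℝ) + 1) := by
    rintro ⟨n, k⟩
    rw [hF n k]
    have hΓ : (0 : ℝ) < Real.Gamma (β * ((n + k : ℕ) : ℝ) + 1) := hΓpos _ (by positivity)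
    rw [abs_div, abs_of_pos hΓ, abs_mul, abs_mul, abs_mul, abs_pow, abs_neg, abs_one,
      one_pow, one_mul, abs_of_nonneg (hw0 n), abs_of_nonneg (by positivity : (0:ℝ) ≤ x ^ (n+k)),
      Nat.abs_cast]
  have hbd : ∀ s : ℕ, ∑ p ∈ antidiagonal s, |F p|
      ≤ (s : ℝ) ^ 2 * (2 * x) ^ s / Real.Gamma (β * s + 1) := by
    intro s
    rw [Nat.sum_antidiagonal_eq_sum_range_succ_mk]
    have h2 : ∀ n ∈ range (s + 1), |F (n, s - n)|
        ≤ (s.choose n : ℝ) * ((s : ℝ) ^ 2 * x ^ s / Real.Gamma (β * s + 1)) := by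
      intro n hn
      have hns : n ≤ s := by simp at hn; omega
      have hadd : n + (s - n) = s := by omega
      rw [habs (n, s - n)]
      simp only [hadd]
      have hΓ : (0 : ℝ) < Real.Gamma (β * s + 1) := hΓpos _ (by positivity)
      rw [div_le_iff₀ hΓ]
      have hws : w n ≤ (s : ℝ) ^ 2 := le_trans (hw n) (by
        have : (n : ℝ) ≤ s := by exact_mod_cast hns
        nlinarith [Nat.cast_nonneg (α := ℝ) n])
      calc (s.choose n : ℝ) * w n * x ^ s
          ≤ (s.choose n : ℝ) * (s : ℝ) ^ 2 * x ^ s := by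
            apply mul_le_mul_of_nonneg_right _ (by positivity)
            exact mul_le_mul_of_nonneg_left hws (by positivity)
        _ = (s.choose n : ℝ) * ((s : ℝ) ^ 2 * x ^ s / Real.Gamma (β * s + 1)) * Real.Gamma (β * s + 1) := by
            field_simp
    calc ∑ n ∈ range (s + 1), |F (n, s - n)|
        ≤ ∑ n ∈ range (s + 1), (s.choose n : ℝ) * ((s : ℝ) ^ 2 * x ^ s / Real.Gamma (β * s + 1)) :=
          Finset.sum_le_sum h2
      _ = (2 : ℝ) ^ s * ((s : ℝ) ^ 2 * x ^ s / Real.Gamma (β * s + 1)) := by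
          rw [← Finset.sum_mul]
          congr 1
          exact_mod_cast congrArg (fun a : ℕ => (a : ℝ)) (Nat.sum_range_choose s)
      _ = (s : ℝ) ^ 2 * (2 * x) ^ s / Real.Gamma (β * s + 1) := by
          rw [mul_pow]; ring
  have hG : Summable (fun p : ℕ × ℕ => |F p|) := by
    apply (Equiv.summable_iff (Finset.HasAntidiagonal.sigmaAntidiagonalEquivProd (A := ℕ))).mp
    apply (summable_sigma_of_nonneg (fun _ => abs_nonneg _)).mpr
    constructor
    · intro s; exact Summable.of_finite
    · apply Summable.of_nonneg_of_le
        (fun s => tsum_nonneg (fun _ => abs_nonneg _))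
        (fun s => ?_) (summable_aux hβ (by positivity : (0:ℝ) < 2 * x))
      have h1 : ∑' (p : {p // p ∈ antidiagonal s}),
            |F ((Finset.HasAntidiagonal.sigmaAntidiagonalEquivProd (A := ℕ)) ⟨s, p⟩)|
          = ∑ p ∈ antidiagonal s, |F p| := by
        simp only [Finset.HasAntidiagonal.sigmaAntidiagonalEquivProd_apply]
        exact Finset.tsum_subtype (antidiagonal s) (fun p => |F p|)
      rw [h1]
      exact hbd s
  have hFs : Summable F := Summable.of_abs hG
  have step1 : ∑' n : ℕ, w n * (x ^ n / n.factorial *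
        ∑' k : ℕ, ((n + k).factorial / k.factorial : ℝ) * (-x) ^ k /
          Real.Gamma (β * ((k : ℝ) + n) + 1))
      = ∑' n : ℕ, ∑' k : ℕ, F (n, k) := by
    apply tsum_congr
    intro n
    rw [← mul_assoc, ← tsum_mul_left]
  have step2 : ∑' n : ℕ, ∑' k : ℕ, F (n, k) = ∑' p : ℕ × ℕ, F p := (Summable.tsum_prod hFs).symm
  have hFse : Summable (F ∘ (Finset.HasAntidiagonal.sigmaAntidiagonalEquivProd (A := ℕ))) :=
    (Equiv.summable_iff _).mpr hFs
  have step3 : ∑' p : ℕ × ℕ, F p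
      = ∑' s : ℕ, ∑ p ∈ antidiagonal s, F p := by
    rw [← Equiv.tsum_eq (Finset.HasAntidiagonal.sigmaAntidiagonalEquivProd (A := ℕ)) F]
    rw [Summable.tsum_sigma (f := fun σ : (Σ s : ℕ, {p // p ∈ antidiagonal s}) =>
      F ((Finset.HasAntidiagonal.sigmaAntidiagonalEquivProd (A := ℕ)) σ)) hFse]
    apply tsum_congr
    intro s
    simp only [Finset.HasAntidiagonal.sigmaAntidiagonalEquivProd_apply]
    exact Finset.tsum_subtype (antidiagonal s) F
  have step4 : ∀ s : ℕ, ∑ p ∈ antidiagonal s, F p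
      = x ^ s / Real.Gamma (β * s + 1) *
          ∑ n ∈ Finset.range (s + 1), (-1 : ℝ) ^ (s - n) * w n * (s.choose n) := by
    intro s
    rw [Nat.sum_antidiagonal_eq_sum_range_succ_mk, Finset.mul_sum]
    apply Finset.sum_congr rfl
    intro n hn
    have hns : n ≤ s := by simp at hn; omega
    have hadd : n + (s - n) = s := by omega
    rw [hF n (s - n)]
    simp only [hadd]
    ring
  rw [step1, step2, step3]
  exact tsum_congr step4

theorem fpp_second_moment_and_variance (β lam t : ℝ) (hβ : β ∈ Set.Ioc (0 : ℝ) 1)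
    (hlam : 0 < lam) (ht : 0 < t)
    (q d : ℝ) (hq : q = lam / Real.Gamma (1 + β))
    (hd : d = β * q ^ 2 * betaFn β (1 + β)) :
    (∑' n : ℕ, (n : ℝ) ^ 2 * fracPoissonPMF β lam t n
        = lam * t ^ β / Real.Gamma (1 + β)
          + 2 * lam ^ 2 * t ^ (2 * β) / Real.Gamma (1 + 2 * β))
    ∧ (∑' n : ℕ, (n : ℝ) ^ 2 * fracPoissonPMF β lam t n)
        - (∑' n : ℕ, (n : ℝ) * fracPoissonPMF β lam t n) ^ 2
        = q * t ^ β + t ^ (2 * β) * (2 * d - q ^ 2) := by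
  obtain ⟨hβ0, hβ1⟩ := hβ
  have htβ : (0 : ℝ) < t ^ β := Real.rpow_pos_of_pos ht β
  have hx : (0 : ℝ) < lam * t ^ β := by positivity
  have hΓβ : (0 : ℝ) < Real.Gamma (1 + β) := Real.Gamma_pos_of_pos (by linarith)
  have hΓ2β : (0 : ℝ) < Real.Gamma (1 + 2 * β) := Real.Gamma_pos_of_pos (by linarith)
  have ht2β : t ^ (2 * β) = (t ^ β) ^ 2 := by
    rw [← Real.rpow_natCast (t ^ β) 2, ← Real.rpow_mul ht.le]
    norm_num
    ring_nf
  -- second moment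
  have hM2 : ∑' n : ℕ, (n : ℝ) ^ 2 * fracPoissonPMF β lam t n
      = lam * t ^ β / Real.Gamma (1 + β)
        + 2 * lam ^ 2 * t ^ (2 * β) / Real.Gamma (1 + 2 * β) := by
    have h := moment_eq hβ0 hx (fun n => (n : ℝ) ^ 2)
      (fun n => by positivity) (fun n => le_refl _)
    simp only [fracPoissonPMF]
    rw [h]
    have hcoef : ∀ s : ℕ, (lam * t ^ β) ^ s / Real.Gamma (β * s + 1) *
        ∑ n ∈ Finset.range (s + 1), (-1 : ℝ) ^ (s - n) * ((n : ℝ) ^ 2) * (s.choose n)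
        = (lam * t ^ β) ^ s / Real.Gamma (β * s + 1) *
          ((if s = 1 then 1 else 0) + (if s = 2 then 2 else 0)) := by
      intro s; rw [coef_sq]
    rw [tsum_congr hcoef]
    rw [tsum_eq_sum (s := ({1, 2} : Finset ℕ)) (fun b hb => by
      simp only [Finset.mem_insert, Finset.mem_singleton] at hb
      push_neg at hb
      rw [if_neg hb.1, if_neg hb.2]; ring)]
    rw [Finset.sum_pair (by norm_num : (1:ℕ) ≠ 2)]
    norm_num
    rw [show β * 2 + 1 = 1 + 2 * β by ring, show β + 1 = 1 + β by ring, ht2β, mul_pow]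
    ring
  refine ⟨hM2, ?_⟩
  -- first moment
  have hM1 : ∑' n : ℕ, (n : ℝ) * fracPoissonPMF β lam t n
      = lam * t ^ β / Real.Gamma (1 + β) := by
    have h := moment_eq hβ0 hx (fun n => (n : ℝ))
      (fun n => by positivity) (fun n => by
        rcases n with _ | m
        · norm_num
        · push_cast; nlinarith [Nat.cast_nonneg (α := ℝ) m])
    simp only [fracPoissonPMF]
    rw [h]
    have hcoef : ∀ s : ℕ, (lam * t ^ β) ^ s / Real.Gamma (β * s + 1) *
        ∑ n ∈ Finset.range (s + 1), (-1 : ℝ) ^ (s - n) * (n : ℝ) * (s.choose n)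
        = (lam * t ^ β) ^ s / Real.Gamma (β * s + 1) * (if s = 1 then 1 else 0) := by
      intro s; rw [coef_one]
    rw [tsum_congr hcoef]
    rw [tsum_eq_sum (s := ({1} : Finset ℕ)) (fun b hb => by
      simp only [Finset.mem_singleton] at hb
      rw [if_neg hb]; ring)]
    rw [Finset.sum_singleton]
    norm_num
    rw [show β + 1 = 1 + β by ring]
  rw [hM2, hM1]
  -- value of d
  have hβΓ : Real.Gamma (1 + β) = β * Real.Gamma β := by
    rw [add_comm, Real.Gamma_add_one hβ0.ne']
  have hΓβ' : (0 : ℝ) < Real.Gamma β := Real.Gamma_pos_of_pos hβ0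
  have hdval : d = lam ^ 2 / Real.Gamma (1 + 2 * β) := by
    rw [hd, hq, betaFn, show β + (1 + β) = 1 + 2 * β by ring, hβΓ]
    field_simp
  rw [hdval, hq, ht2β]
  field_simp
  ring
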